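/- Let n > 1 be a composite integer. Then Γ̃(ℤ/nℤ) = Z*(Γ(ℤ/nℤ)) (i.e., for all distinct nonzero zero-divisors x, y with xy = 0, one has x + y a zero-divisor) if and only if n is a power of a prime. -/

import Mathlib

def ZDStar {R : Type*} [CommRing R] (x : R) : Prop := x ≠ 0 ∧ ∃ y ≠ 0, x * y = 0

theorem stmt19 (n : ℕ) (hn : 1 < n) (hcomp : ¬ n.Prime) :
    (∀ x y : ZMod n, ZDStar x → ZDStar y → x ≠ y → x * y = 0 →
      ∃ z ≠ 0, (x + y) * z = 0) ↔
    ∃ (p k : ℕ), p.Prime ∧ n = p ^ k := by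
  constructor
  · intro h
    by_contra hnp
    push_neg at hnp
    have hdecomp : ∃ a b : ℕ, 1 < a ∧ 1 < b ∧ Nat.Coprime a b ∧ n = a * b := by
      obtain ⟨p, hp, hpd⟩ := Nat.exists_prime_and_dvd (by omega : n ≠ 1)
      have hn0 : n ≠ 0 := by omega
      refine ⟨p ^ n.factorization p, n / p ^ n.factorization p, ?_, ?_, ?_, ?_⟩
      · have hk : 0 < n.factorization p := Nat.Prime.factorization_pos_of_dvd hp hn0 hpd
        calc 1 < p := hp.one_lt
          _ ≤ p ^ n.factorization p := Nat.le_self_pow (by omega) p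
      · have hb0 : 0 < n / p ^ n.factorization p := Nat.ordCompl_pos p hn0
        have hb1 : n / p ^ n.factorization p ≠ 1 := by
          intro h1
          have := Nat.ordProj_mul_ordCompl_eq_self n p
          rw [h1, mul_one] at this
          exact hnp p (n.factorization p) hp this.symm
        omega
      · exact Nat.Coprime.pow_left _ (Nat.coprime_ordCompl hp hn0)
      · exact (Nat.ordProj_mul_ordCompl_eq_self n p).symm
    obtain ⟨a, b, ha1, hb1, hcop, rfl⟩ := hdecomp
    haveI : Fact (1 < a) := ⟨ha1⟩
    haveI : Fact (1 < b) := ⟨hb1⟩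
    let e := (ZMod.chineseRemainder hcop).symm
    set x : ZMod (a * b) := e (1, 0) with hx
    set y : ZMod (a * b) := e (0, 1) with hy
    have hxy0 : x * y = 0 := by
      rw [hx, hy, ← map_mul]
      simp
    have hx0 : x ≠ 0 := by
      rw [hx]
      intro h0
      have : ((1, 0) : ZMod a × ZMod b) = 0 := by
        have := e.injective (h0.trans (map_zero e).symm)
        exact this
      simpa [Prod.ext_iff] using this
    have hy0 : y ≠ 0 := by
      rw [hy]
      intro h0
      have : ((0, 1) : ZMod a × ZMod b) = 0 := e.injective (h0.trans (map_zero e).symm)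
      simpa [Prod.ext_iff] using this
    have hne : x ≠ y := by
      rw [hx, hy]
      intro h0
      have := e.injective h0
      simpa [Prod.ext_iff] using this
    have hsum : x + y = 1 := by
      rw [hx, hy, ← map_add]
      have : ((1, 0) : ZMod a × ZMod b) + (0, 1) = 1 := by
        simp [Prod.ext_iff]
      rw [this, map_one]
    obtain ⟨z, hz0, hz⟩ := h x y ⟨hx0, y, hy0, hxy0⟩ ⟨hy0, x, hx0, by simpa [mul_comm] using hxy0⟩ hne hxy0
    rw [hsum, one_mul] at hz
    exact hz0 hz
  · rintro ⟨p, k, hp, rfl⟩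
    have hk2 : 2 ≤ k := by
      rcases k with _ | _ | k
      · simp at hn
      · simp at hcomp; exact absurd hp hcomp
      · omega
    haveI : NeZero (p ^ k) := ⟨by positivity⟩
    intro x y hx hy hne hmul
    have key : ∀ w : ZMod (p ^ k), ZDStar w → p ∣ w.val := by
      intro w ⟨hw0, u, hu0, hwu⟩
      have hnu : ¬ IsUnit w := by
        intro hu
        obtain ⟨v, hv⟩ := hu.exists_left_inv
        have : u = 0 := by
          calc u = v * (w * u) := by rw [← mul_assoc, hv, one_mul]
            _ = 0 := by rw [hwu, mul_zero]
        exact hu0 this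
      have hcast : ((w.val : ℕ) : ZMod (p ^ k)) = w := ZMod.natCast_rightInverse w
      have hnc : ¬ Nat.Coprime w.val (p ^ k) := by
        intro hc
        exact hnu (by rw [← hcast]; exact (ZMod.isUnit_iff_coprime _ _).mpr hc)
      by_contra hpd
      exact hnc (Nat.Coprime.pow_right _ ((Nat.Prime.coprime_iff_not_dvd hp).mpr hpd).symm)
    obtain ⟨c, hc⟩ := key x hx
    obtain ⟨d, hd⟩ := key y hy
    refine ⟨(p : ZMod (p ^ k)) ^ (k - 1), ?_, ?_⟩
    · intro h0
      have : ((p ^ (k - 1) : ℕ) : ZMod (p ^ k)) = 0 := by push_cast; exact h0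
      rw [ZMod.natCast_eq_zero_iff] at this
      exact absurd (Nat.pow_dvd_pow_iff_le_right hp.one_lt |>.mp this) (by omega)
    · have hxv : x = ((p * c : ℕ) : ZMod (p ^ k)) := by rw [← hc]; exact (ZMod.natCast_rightInverse x).symm
      have hyv : y = ((p * d : ℕ) : ZMod (p ^ k)) := by rw [← hd]; exact (ZMod.natCast_rightInverse y).symm
      rw [hxv, hyv]
      have : ((p * c : ℕ) : ZMod (p ^ k)) + ((p * d : ℕ) : ZMod (p ^ k)) = ((p * (c + d) : ℕ) : ZMod (p ^ k)) := by push_cast; ring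
      rw [this]
      have hcalc : ((p * (c + d) : ℕ) : ZMod (p ^ k)) * (p : ZMod (p ^ k)) ^ (k - 1)
          = ((p * (c + d) * p ^ (k - 1) : ℕ) : ZMod (p ^ k)) := by push_cast; ring
      rw [hcalc, ZMod.natCast_eq_zero_iff]
      have : p ^ k ∣ p * p ^ (k - 1) := by
        rw [← pow_succ']
        exact pow_dvd_pow p (by omega)
      calc p ^ k ∣ p * p ^ (k - 1) := this
        _ ∣ p * (c + d) * p ^ (k - 1) := mul_dvd_mul (dvd_mul_right p (c + d)) dvd_rfl
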